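/- Let f satisfy (H1) and c > 0. Then every C² solution v : ℝ → ℝ of v'' + c·v' + f(v) = 0 with v → 0 at -∞ and v → 1 at +∞ satisfies v'(z) ≥ 0 for all z ∈ ℝ, and there exists an open interval (z₀, z₁) ⊆ ℝ (with -∞ ≤ z₀ < z₁ ≤ +∞) such that v' > 0 on (z₀, z₁), v(z) = 0 for all z ≤ z₀ (when z₀ > -∞), and v(z) = 1 for all z ≥ z₁ (when z₁ < +∞). -/

import Mathlib

open Filter Set

section Aux

lemma basics_aux {v : ℝ → ℝ} (hv : ContDiff ℝ 2 v) :
    Differentiable ℝ v ∧ Differentiable ℝ (deriv v) ∧ Continuous (deriv (deriv v)) := by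
  have h2 : ContDiff ℝ ((1:ℕ) + 1) v := by exact_mod_cast hv
  obtain ⟨hd, -, h1⟩ := contDiff_succ_iff_deriv.mp h2
  have h1' : ContDiff ℝ ((0:ℕ) + 1) (deriv v) := by exact_mod_cast h1
  obtain ⟨hd2, -, h0⟩ := contDiff_succ_iff_deriv.mp h1'
  exact ⟨hd, hd2, h0.continuous⟩

variable {v : ℝ → ℝ} (hd1 : Differentiable ℝ v) (hd2 : Differentiable ℝ (deriv v))
  (hw' : Continuous (deriv (deriv v))) {x ε : ℝ}

include hd1 hd2 hw' in
lemma left_of_pos2 (hx : deriv v x = 0) (h2 : 0 < deriv (deriv v) x) (hε : 0 < ε) :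
    ∃ y, y ∈ Ioo (x - ε) x ∧ v x < v y ∧ deriv v y < 0 := by
  have hev : ∀ᶠ z in nhds x, 0 < deriv (deriv v) z :=
    (hw'.continuousAt).eventually_const_lt h2
  obtain ⟨η, hη, hball⟩ := Metric.eventually_nhds_iff.mp hev
  set δ := min (η/2) (ε/2) with hδdef
  have hδ : 0 < δ := lt_min (by linarith) (by linarith)
  have hδη : δ < η := lt_of_le_of_lt (min_le_left _ _) (by linarith)
  have hδε : δ < ε := lt_of_le_of_lt (min_le_right _ _) (by linarith)
  have hpos : ∀ z ∈ Icc (x - δ) x, 0 < deriv (deriv v) z := by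
    intro z hz
    apply hball
    rw [Real.dist_eq, abs_lt]
    constructor <;> [linarith [hz.1]; linarith [hz.2, hδ]]
  have hmono : StrictMonoOn (deriv v) (Icc (x - δ) x) :=
    strictMonoOn_of_deriv_pos (convex_Icc _ _) hd2.continuous.continuousOn
      (fun z hz => hpos z (interior_subset (by simpa using hz)))
  have hwneg : ∀ y ∈ Ico (x - δ) x, deriv v y < 0 := by
    intro y hy
    have := hmono ⟨hy.1, hy.2.le⟩ ⟨by linarith [hδ], le_refl x⟩ hy.2
    rwa [hx] at this
  have hanti : StrictAntiOn v (Icc (x - δ) x) :=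
    strictAntiOn_of_deriv_neg (convex_Icc _ _) hd1.continuous.continuousOn
      (fun z hz => by
        rw [interior_Icc] at hz
        exact hwneg z ⟨hz.1.le, hz.2⟩)
  refine ⟨x - δ/2, ⟨by linarith, by linarith⟩, ?_, ?_⟩
  · exact hanti ⟨by linarith, by linarith⟩ ⟨by linarith, le_refl x⟩ (by linarith)
  · exact hwneg _ ⟨by linarith, by linarith⟩

include hd1 hd2 hw' in
lemma left_of_neg2 (hx : deriv v x = 0) (h2 : deriv (deriv v) x < 0) (hε : 0 < ε) :
    ∃ y, y ∈ Ioo (x - ε) x ∧ v y < v x := by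
  have hev : ∀ᶠ z in nhds x, deriv (deriv v) z < 0 :=
    (hw'.continuousAt).eventually_lt_const h2
  obtain ⟨η, hη, hball⟩ := Metric.eventually_nhds_iff.mp hev
  set δ := min (η/2) (ε/2) with hδdef
  have hδ : 0 < δ := lt_min (by linarith) (by linarith)
  have hneg : ∀ z ∈ Icc (x - δ) x, deriv (deriv v) z < 0 := by
    intro z hz
    apply hball
    rw [Real.dist_eq, abs_lt]
    have : δ < η := lt_of_le_of_lt (min_le_left _ _) (by linarith)
    constructor <;> [linarith [hz.1]; linarith [hz.2, hδ]]
  have hmono : StrictAntiOn (deriv v) (Icc (x - δ) x) :=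
    strictAntiOn_of_deriv_neg (convex_Icc _ _) hd2.continuous.continuousOn
      (fun z hz => hneg z (interior_subset (by simpa using hz)))
  have hwpos : ∀ y ∈ Ico (x - δ) x, 0 < deriv v y := by
    intro y hy
    have := hmono ⟨hy.1, hy.2.le⟩ ⟨by linarith [hδ], le_refl x⟩ hy.2
    rwa [hx] at this
  have hsm : StrictMonoOn v (Icc (x - δ) x) :=
    strictMonoOn_of_deriv_pos (convex_Icc _ _) hd1.continuous.continuousOn
      (fun z hz => by
        rw [interior_Icc] at hz
        exact hwpos z ⟨hz.1.le, hz.2⟩)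
  have hδε : δ < ε := lt_of_le_of_lt (min_le_right _ _) (by linarith)
  refine ⟨x - δ/2, ⟨by linarith, by linarith⟩, ?_⟩
  exact hsm ⟨by linarith, by linarith⟩ ⟨by linarith, le_refl x⟩ (by linarith)

include hd2 hw' in
lemma right_of_neg2 (hx : deriv v x = 0) (h2 : deriv (deriv v) x < 0) (hε : 0 < ε) :
    ∃ y, y ∈ Ioo x (x + ε) ∧ deriv v y < 0 := by
  have hev : ∀ᶠ z in nhds x, deriv (deriv v) z < 0 :=
    (hw'.continuousAt).eventually_lt_const h2
  obtain ⟨η, hη, hball⟩ := Metric.eventually_nhds_iff.mp hev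
  set δ := min (η/2) (ε/2) with hδdef
  have hδ : 0 < δ := lt_min (by linarith) (by linarith)
  have hneg : ∀ z ∈ Icc x (x + δ), deriv (deriv v) z < 0 := by
    intro z hz
    apply hball
    rw [Real.dist_eq, abs_lt]
    have : δ < η := lt_of_le_of_lt (min_le_left _ _) (by linarith)
    constructor <;> [linarith [hz.1]; linarith [hz.2, hδ]]
  have hmono : StrictAntiOn (deriv v) (Icc x (x + δ)) :=
    strictAntiOn_of_deriv_neg (convex_Icc _ _) hd2.continuous.continuousOn
      (fun z hz => hneg z (interior_subset (by simpa using hz)))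
  have hδε : δ < ε := lt_of_le_of_lt (min_le_right _ _) (by linarith)
  refine ⟨x + δ/2, ⟨by linarith, by linarith⟩, ?_⟩
  have h1 : x ∈ Icc x (x + δ) := ⟨le_refl x, by linarith⟩
  have h2' : x + δ/2 ∈ Icc x (x + δ) := ⟨by linarith, by linarith⟩
  have := hmono h1 h2' (by linarith)
  rwa [hx] at this

end Aux

section Bounds
variable {f : ℝ → ℝ} {c : ℝ} {v : ℝ → ℝ}
  (hd1 : Differentiable ℝ v) (hd2 : Differentiable ℝ (deriv v))
  (hw' : Continuous (deriv (deriv v)))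
  (hode : ∀ z, deriv (deriv v) z + c * deriv v z + f (v z) = 0)
  (hbot : Tendsto v atBot (nhds 0)) (htop : Tendsto v atTop (nhds 1))

include hd1 hd2 hw' hode hbot htop in
lemma v_le_one (hneg1 : ∀ s, 1 < s → f s < 0) : ∀ z, v z ≤ 1 := by
  by_contra hcon
  push_neg at hcon
  obtain ⟨zs, hzs⟩ := hcon
  obtain ⟨R₁, hR₁⟩ := eventually_atTop.mp (htop.eventually_lt_const hzs)
  obtain ⟨R₀, hR₀⟩ := eventually_atBot.mp
    (hbot.eventually_lt_const (lt_trans one_pos hzs : (0:ℝ) < v zs))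
  set a₀ := min R₀ (zs - 1) with ha₀
  set b₀ := max R₁ (zs + 1) with hb₀
  have hzsmem : zs ∈ Icc a₀ b₀ := by
    constructor
    · calc a₀ ≤ zs - 1 := min_le_right _ _
        _ ≤ zs := by linarith
    · calc zs ≤ zs + 1 := by linarith
        _ ≤ b₀ := le_max_right _ _
  obtain ⟨x, hxK, hmax⟩ := isCompact_Icc.exists_isMaxOn ⟨zs, hzsmem⟩ hd1.continuous.continuousOn
  have hzsx : v zs ≤ v x := hmax hzsmem
  have hglobal : ∀ y, v y ≤ v x := by
    intro y
    rcases lt_or_ge y a₀ with h | h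
    · have : v y < v zs := hR₀ y (le_trans h.le (min_le_left _ _))
      linarith
    · rcases le_or_gt y b₀ with h2 | h2
      · exact hmax ⟨h, h2⟩
      · have : v y < v zs := hR₁ y (by
          calc R₁ ≤ b₀ := le_max_left _ _
            _ ≤ y := h2.le)
        linarith
  have hlm : IsLocalMax v x := (isMaxOn_iff.mpr (fun y _ => hglobal y)).isLocalMax univ_mem
  have hwx : deriv v x = 0 := hlm.deriv_eq_zero
  have h1x : 1 < v x := lt_of_lt_of_le hzs hzsx
  have hfx : f (v x) < 0 := hneg1 _ h1x
  have hw'x : 0 < deriv (deriv v) x := by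
    have := hode x
    rw [hwx] at this
    linarith
  obtain ⟨y, -, hvy, -⟩ := left_of_pos2 hd1 hd2 hw' hwx hw'x one_pos
  exact absurd (hglobal y) (not_le.mpr hvy)

include hd1 hd2 hw' hode hbot htop in
lemma v_nonneg (hpos0 : ∀ s, s < 0 → 0 < f s) : ∀ z, 0 ≤ v z := by
  by_contra hcon
  push_neg at hcon
  obtain ⟨zs, hzs⟩ := hcon
  obtain ⟨R₁, hR₁⟩ := eventually_atTop.mp (htop.eventually_const_lt (by linarith : v zs < 1))
  obtain ⟨R₀, hR₀⟩ := eventually_atBot.mp (hbot.eventually_const_lt hzs)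
  set a₀ := min R₀ (zs - 1) with ha₀
  set b₀ := max R₁ (zs + 1) with hb₀
  have hzsmem : zs ∈ Icc a₀ b₀ := by
    constructor
    · calc a₀ ≤ zs - 1 := min_le_right _ _
        _ ≤ zs := by linarith
    · calc zs ≤ zs + 1 := by linarith
        _ ≤ b₀ := le_max_right _ _
  obtain ⟨x, hxK, hmin⟩ := isCompact_Icc.exists_isMinOn ⟨zs, hzsmem⟩ hd1.continuous.continuousOn
  have hzsx : v x ≤ v zs := hmin hzsmem
  have hglobal : ∀ y, v x ≤ v y := by
    intro y
    rcases lt_or_ge y a₀ with h | h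
    · have : v zs < v y := hR₀ y (h.le.trans (min_le_left _ _))
      linarith
    · rcases le_or_gt y b₀ with h2 | h2
      · exact hmin ⟨h, h2⟩
      · have : v zs < v y := hR₁ y ((le_max_left _ _).trans h2.le)
        linarith
  have hlm : IsLocalMin v x := (isMinOn_iff.mpr (fun y _ => hglobal y)).isLocalMin univ_mem
  have hwx : deriv v x = 0 := hlm.deriv_eq_zero
  have h0x : v x < 0 := lt_of_le_of_lt hzsx hzs
  have hfx : 0 < f (v x) := hpos0 _ h0x
  have hw'x : deriv (deriv v) x < 0 := by
    have := hode x
    rw [hwx] at this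
    linarith
  obtain ⟨y, -, hvy⟩ := left_of_neg2 hd1 hd2 hw' hwx hw'x one_pos
  exact absurd (hglobal y) (not_le.mpr hvy)

end Bounds

noncomputable def Ff (f : ℝ → ℝ) (r : ℝ) : ℝ := ∫ s in (0:ℝ)..r, f s

noncomputable def En (f v : ℝ → ℝ) (z : ℝ) : ℝ := (deriv v z)^2/2 + Ff f (v z)

lemma Ff_hasDerivAt {f : ℝ → ℝ} (hf : Continuous f) (r : ℝ) : HasDerivAt (Ff f) (f r) r :=
  intervalIntegral.integral_hasDerivAt_right (hf.intervalIntegrable _ _)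
    (hf.stronglyMeasurable.stronglyMeasurableAtFilter) hf.continuousAt

lemma Ff_cont {f : ℝ → ℝ} (hf : Continuous f) : Continuous (Ff f) :=
  Differentiable.continuous (fun r => (Ff_hasDerivAt hf r).differentiableAt)

section Energy
variable {f : ℝ → ℝ} {c : ℝ} {v : ℝ → ℝ}
  (hf : Continuous f)
  (hd1 : Differentiable ℝ v) (hd2 : Differentiable ℝ (deriv v))
  (hode : ∀ z, deriv (deriv v) z + c * deriv v z + f (v z) = 0)

include hf hd1 hd2 hode in
lemma En_hasDerivAt (z : ℝ) : HasDerivAt (En f v) (-c * (deriv v z)^2) z := by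
  have h1 : HasDerivAt (fun z => (deriv v z)^2/2) (deriv v z * deriv (deriv v) z) z := by
    have := ((hd2 z).hasDerivAt.pow 2)
    have h := this.div_const 2
    refine h.congr_deriv ?_
    push_cast
    ring
  have h2 : HasDerivAt (fun z => Ff f (v z)) (f (v z) * deriv v z) z :=
    (Ff_hasDerivAt hf (v z)).comp z (hd1 z).hasDerivAt
  have h3 := h1.add h2
  refine h3.congr_deriv ?_
  linear_combination (deriv v z) * (hode z)

include hf hd1 hd2 hode in
lemma En_anti (hc : 0 < c) : Antitone (En f v) := by
  apply antitone_of_deriv_nonpos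
  · exact fun z => (En_hasDerivAt hf hd1 hd2 hode z).differentiableAt
  · intro z
    rw [(En_hasDerivAt hf hd1 hd2 hode z).deriv]
    nlinarith [sq_nonneg (deriv v z)]

include hf hd1 hd2 hode in
lemma En_strict (hc : 0 < c) {x y t : ℝ} (ht : t ∈ Ioo x y) (hwt : deriv v t ≠ 0) :
    En f v y < En f v x := by
  have hwc : Continuous (deriv v) := hd2.continuous
  have hev : ∀ᶠ z in nhds t, deriv v z ≠ 0 := hwc.continuousAt.eventually_ne hwt
  obtain ⟨η, hη, hball⟩ := Metric.eventually_nhds_iff.mp hev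
  set δ := min (η/2) (min ((t - x)/2) ((y - t)/2)) with hδdef
  have hδ : 0 < δ := lt_min (by linarith) (lt_min (by linarith [ht.1]) (by linarith [ht.2]))
  have hδη : δ < η := lt_of_le_of_lt (min_le_left _ _) (by linarith)
  have hδx : x < t - δ := by
    have : δ ≤ (t - x)/2 := le_trans (min_le_right _ _) (min_le_left _ _)
    linarith [ht.1]
  have hδy : t + δ < y := by
    have : δ ≤ (y - t)/2 := le_trans (min_le_right _ _) (min_le_right _ _)
    linarith [ht.2]
  have hanti : StrictAntiOn (En f v) (Icc (t - δ) (t + δ)) := by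
    apply strictAntiOn_of_deriv_neg (convex_Icc _ _)
    · exact Differentiable.continuous
        (fun z => (En_hasDerivAt hf hd1 hd2 hode z).differentiableAt) |>.continuousOn
    · intro z hz
      rw [interior_Icc] at hz
      rw [(En_hasDerivAt hf hd1 hd2 hode z).deriv]
      have hz' : deriv v z ≠ 0 := by
        apply hball
        rw [Real.dist_eq, abs_lt]
        constructor <;> [linarith [hz.1]; linarith [hz.2]]
      have : 0 < (deriv v z)^2 := by positivity
      nlinarith
  have hA := En_anti hf hd1 hd2 hode hc
  calc En f v y ≤ En f v (t + δ) := hA (by linarith)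
    _ < En f v (t - δ) := hanti ⟨by linarith, by linarith⟩ ⟨by linarith, by linarith⟩ (by linarith)
    _ ≤ En f v x := hA (by linarith)

include hf hd1 hd2 hode in
lemma En_ge (hc : 0 < c) (htop : Tendsto v atTop (nhds 1))
    (hv0 : ∀ z, 0 ≤ v z) (hv1 : ∀ z, v z ≤ 1) : ∀ z, Ff f 1 ≤ En f v z := by
  have hEanti : Antitone (En f v) := En_anti hf hd1 hd2 hode hc
  obtain ⟨r₀, hr₀mem, hr₀min⟩ := isCompact_Icc.exists_isMinOn (⟨0, left_mem_Icc.mpr zero_le_one⟩)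
    (Ff_cont hf).continuousOn
  have hbdd : BddBelow (range (En f v)) := by
    refine ⟨Ff f r₀, ?_⟩
    rintro _ ⟨z, rfl⟩
    have h1 : Ff f r₀ ≤ Ff f (v z) := hr₀min ⟨hv0 z, hv1 z⟩
    have : 0 ≤ (deriv v z)^2/2 := by positivity
    simp only [En]; linarith
  have hlim : Tendsto (En f v) atTop (nhds (⨅ z, En f v z)) := tendsto_atTop_ciInf hEanti hbdd
  have hFv : Tendsto (fun z => Ff f (v z)) atTop (nhds (Ff f 1)) :=
    ((Ff_cont hf).tendsto 1).comp htop
  have hw2 : Tendsto (fun z => (deriv v z)^2) atTop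
      (nhds (2*((⨅ z, En f v z) - Ff f 1))) := by
    have h := (hlim.sub hFv).const_mul 2
    convert h using 2 with z
    simp only [En]; ring
  have hK0 : 0 ≤ 2*((⨅ z, En f v z) - Ff f 1) :=
    ge_of_tendsto hw2 (Eventually.of_forall fun z => sq_nonneg _)
  intro z
  have h2 := ciInf_le hbdd z
  linarith

end Energy
section Main
variable {f : ℝ → ℝ} {s₀ c : ℝ} {v : ℝ → ℝ}
  (hf : Continuous f) (hs₀ : 0 < s₀) (hs₀1 : s₀ < 1)
  (hf0 : f 0 = 0) (hfs₀ : f s₀ = 0) (hf1 : f 1 = 0)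
  (hneg : ∀ s, (s ∈ Ioo 0 s₀ ∨ s ∈ Ioi 1) → f s < 0)
  (hpos : ∀ s, (s ∈ Iio 0 ∨ s ∈ Ioo s₀ 1) → 0 < f s)
  (hc : 0 < c)
  (hd1 : Differentiable ℝ v) (hd2 : Differentiable ℝ (deriv v))
  (hw' : Continuous (deriv (deriv v)))
  (hode : ∀ z, deriv (deriv v) z + c * deriv v z + f (v z) = 0)
  (hbot : Tendsto v atBot (nhds 0)) (htop : Tendsto v atTop (nhds 1))

include hf hs₀ hs₀1 hfs₀ hf1 hneg hpos hc hd1 hd2 hw' hode hbot htop in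
lemma deriv_v_nonneg : ∀ z, 0 ≤ deriv v z := by
  have hv1 : ∀ z, v z ≤ 1 := v_le_one hd1 hd2 hw' hode hbot htop
    (fun s hs => hneg s (Or.inr hs))
  have hv0 : ∀ z, 0 ≤ v z := v_nonneg hd1 hd2 hw' hode hbot htop
    (fun s hs => hpos s (Or.inl hs))
  by_contra hcon
  push_neg at hcon
  obtain ⟨a, ha⟩ := hcon
  -- Step 1 : strict decrease near a
  have hev : ∀ᶠ z in nhds a, deriv v z < 0 := (hd2.continuous.continuousAt).eventually_lt_const ha
  obtain ⟨η, hη, hball⟩ := Metric.eventually_nhds_iff.mp hev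
  set ηq := min (η/2) (1/2) with hηq
  have hηq0 : 0 < ηq := lt_min (by linarith) (by norm_num)
  have hηq1 : ηq ≤ 1/2 := min_le_right _ _
  have hηqη : ηq < η := lt_of_le_of_lt (min_le_left _ _) (by linarith)
  have hanti : StrictAntiOn v (Icc (a - ηq) (a + ηq)) := by
    apply strictAntiOn_of_deriv_neg (convex_Icc _ _) hd1.continuous.continuousOn
    intro z hz
    rw [interior_Icc] at hz
    apply hball
    rw [Real.dist_eq, abs_lt]
    constructor <;> [linarith [hz.1]; linarith [hz.2]]
  set a' := a + ηq with ha'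
  set a'' := a - ηq with ha''
  have hva' : v a' < v a := hanti ⟨by linarith, by linarith⟩ ⟨by linarith, by linarith⟩ (by linarith)
  have hva'' : v a < v a'' := hanti ⟨by linarith, by linarith⟩ ⟨by linarith, by linarith⟩ (by linarith)
  -- Step 2 : the minimum point b on the right
  obtain ⟨R₁', hR₁'⟩ := eventually_atTop.mp
    (htop.eventually_const_lt (lt_of_lt_of_le hva' (hv1 a)))
  set R₁ := max R₁' (a + 1) with hR₁def
  have haR₁ : a < R₁ := lt_of_lt_of_le (by linarith) (le_max_right _ _)
  have ha'R₁ : a' ≤ R₁ := le_trans (by simp only [ha']; linarith) (le_max_right _ _)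
  have hvR₁ : v a' < v R₁ := hR₁' R₁ (le_max_left _ _)
  obtain ⟨b, hbmem, hbmin⟩ := isCompact_Icc.exists_isMinOn
    (⟨a, left_mem_Icc.mpr haR₁.le⟩) hd1.continuous.continuousOn
  have hba' : v b ≤ v a' := hbmin ⟨by simp only [ha']; linarith, ha'R₁⟩
  have hab : a < b := by
    rcases eq_or_lt_of_le hbmem.1 with rfl | h
    · exact absurd hba' (by linarith)
    · exact h
  have hbR₁ : b < R₁ := by
    rcases eq_or_lt_of_le hbmem.2 with rfl | h
    · exact absurd hba' (by linarith)
    · exact h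
  have hlocmin : IsLocalMin v b := hbmin.isLocalMin (Icc_mem_nhds hab hbR₁)
  have hwb : deriv v b = 0 := hlocmin.deriv_eq_zero
  set m := v b with hm
  have hfm : f m ≤ 0 := by
    by_contra hfm'
    push_neg at hfm'
    have hw'b : deriv (deriv v) b < 0 := by
      have := hode b
      rw [hwb] at this
      linarith
    obtain ⟨y, hy, hvy⟩ := left_of_neg2 hd1 hd2 hw' hwb hw'b (by linarith : (0:ℝ) < b - a)
    have hay : a < y := by have := hy.1; linarith
    exact absurd (hbmin ⟨hay.le, le_trans hy.2.le hbmem.2⟩) (not_le.mpr hvy)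
  have hm0 : 0 ≤ m := hv0 b
  have hm1 : m < 1 := by linarith [hv1 a]
  have hms₀ : m ≤ s₀ := by
    by_contra hms'
    push_neg at hms'
    exact absurd (hpos m (Or.inr ⟨hms', hm1⟩)) (not_lt.mpr hfm)
  -- Step 3 : the maximum point ζ on the left
  have hva''0 : 0 < v a'' := lt_of_le_of_lt (hv0 a) hva''
  obtain ⟨R₀', hR₀'⟩ := eventually_atBot.mp (hbot.eventually_lt_const hva''0)
  set R₀ := min R₀' (a - 1) with hR₀def
  have hR₀a'' : R₀ < a'' := by
    have h1 : R₀ ≤ a - 1 := min_le_right _ _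
    simp only [ha'']
    linarith
  have hR₀a : R₀ < a := by linarith
  obtain ⟨ζ, hζmem, hζmax⟩ := isCompact_Icc.exists_isMaxOn
    (⟨a, right_mem_Icc.mpr hR₀a.le⟩) hd1.continuous.continuousOn
  have hζa'' : v a'' ≤ v ζ := hζmax ⟨hR₀a''.le, by simp only [ha'']; linarith⟩
  have hζa : ζ < a := by
    rcases eq_or_lt_of_le hζmem.2 with rfl | h
    · exact absurd hζa'' (by linarith)
    · exact h
  have hR₀ζ : R₀ < ζ := by
    rcases eq_or_lt_of_le hζmem.1 with heq | h
    · exfalso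
      have h2 : v R₀ < v a'' := hR₀' R₀ (min_le_left _ _)
      rw [← heq] at hζa''
      linarith
    · exact h
  have hlocmax : IsLocalMax v ζ := hζmax.isLocalMax (Icc_mem_nhds hR₀ζ hζa)
  have hwζ : deriv v ζ = 0 := hlocmax.deriv_eq_zero
  set M := v ζ with hM
  have hfM : 0 ≤ f M := by
    by_contra hfM'
    push_neg at hfM'
    have hw'ζ : 0 < deriv (deriv v) ζ := by
      have := hode ζ
      rw [hwζ] at this
      linarith
    obtain ⟨y, hy, hvy, -⟩ := left_of_pos2 hd1 hd2 hw' hwζ hw'ζ (by linarith : (0:ℝ) < ζ - R₀)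
    have hR₀y : R₀ < y := by have := hy.1; linarith
    exact absurd (hζmax ⟨hR₀y.le, le_trans hy.2.le hζmem.2⟩) (not_le.mpr hvy)
  have hM1 : M ≤ 1 := hv1 ζ
  have hM0 : 0 < M := lt_of_lt_of_le hva''0 hζa''
  have hMs₀ : s₀ ≤ M := by
    by_contra hMs'
    push_neg at hMs'
    exact absurd (hneg M (Or.inl ⟨hM0, hMs'⟩)) (not_lt.mpr hfM)
  -- Step 4 : energy contradiction
  have hEb : En f v b = Ff f m := by simp [En, hwb, hm]
  have hEζ : En f v ζ = Ff f M := by simp [En, hwζ, hM]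
  have hEbζ : En f v b ≤ En f v ζ := En_anti hf hd1 hd2 hode hc (by linarith : ζ ≤ b)
  obtain ⟨t, htmem, hts⟩ := exists_hasDerivAt_eq_slope v (deriv v) hbR₁
    hd1.continuous.continuousOn (fun x _ => (hd1 x).hasDerivAt)
  have htpos : 0 < deriv v t := by
    rw [hts]
    apply div_pos <;> linarith
  have hstr : En f v R₁ < En f v b :=
    En_strict hf hd1 hd2 hode hc htmem (ne_of_gt htpos)
  have hge : Ff f 1 ≤ En f v R₁ := En_ge hf hd1 hd2 hode hc htop hv0 hv1 R₁
  have hFM1 : Ff f M ≤ Ff f 1 := by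
    have hint : Ff f M + ∫ s in M..1, f s = Ff f 1 :=
      intervalIntegral.integral_add_adjacent_intervals
        (hf.intervalIntegrable 0 M) (hf.intervalIntegrable M 1)
    have hnn : 0 ≤ ∫ s in M..1, f s := by
      apply intervalIntegral.integral_nonneg hM1
      intro u hu
      have hs₀u : s₀ ≤ u := le_trans hMs₀ hu.1
      rcases eq_or_lt_of_le hs₀u with rfl | h
      · exact le_of_eq hfs₀.symm
      · rcases eq_or_lt_of_le hu.2 with rfl | h2
        · exact le_of_eq hf1.symm
        · exact (hpos u (Or.inr ⟨h, h2⟩)).le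
    linarith
  linarith

include hf hs₀ hs₀1 hfs₀ hf1 hneg hpos hc hd1 hd2 hw' hode hbot htop in
lemma deriv_v_pos (hnn : ∀ z, 0 ≤ deriv v z) {a : ℝ} (h0 : 0 < v a) (h1 : v a < 1) :
    0 < deriv v a := by
  have hv1 : ∀ z, v z ≤ 1 := v_le_one hd1 hd2 hw' hode hbot htop
    (fun s hs => hneg s (Or.inr hs))
  have hv0 : ∀ z, 0 ≤ v z := v_nonneg hd1 hd2 hw' hode hbot htop
    (fun s hs => hpos s (Or.inl hs))
  by_contra hcon
  have hwa : deriv v a = 0 := le_antisymm (not_lt.mp hcon) (hnn a)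
  rcases lt_trichotomy (v a) s₀ with hr | hr | hr
  · have hfr : f (v a) < 0 := hneg _ (Or.inl ⟨h0, hr⟩)
    have hw'a : 0 < deriv (deriv v) a := by
      have := hode a
      rw [hwa] at this
      linarith
    obtain ⟨y, -, -, hwy⟩ := left_of_pos2 hd1 hd2 hw' hwa hw'a one_pos
    exact absurd (hnn y) (not_le.mpr hwy)
  · -- v a = s₀ : energy argument
    obtain ⟨R₁', hR₁'⟩ := eventually_atTop.mp (htop.eventually_const_lt h1)
    set R₁ := max R₁' (a + 1) with hR₁def
    have haR₁ : a < R₁ := lt_of_lt_of_le (by linarith) (le_max_right _ _)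
    have hvR₁ : v a < v R₁ := hR₁' R₁ (le_max_left _ _)
    obtain ⟨t, htmem, hts⟩ := exists_hasDerivAt_eq_slope v (deriv v) haR₁
      hd1.continuous.continuousOn (fun x _ => (hd1 x).hasDerivAt)
    have htpos : 0 < deriv v t := by
      rw [hts]
      apply div_pos <;> linarith
    have hstr : En f v R₁ < En f v a :=
      En_strict hf hd1 hd2 hode hc htmem (ne_of_gt htpos)
    have hge : Ff f 1 ≤ En f v R₁ := En_ge hf hd1 hd2 hode hc htop hv0 hv1 R₁
    have hEa : En f v a = Ff f s₀ := by
      simp [En, hwa, hr]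
    have hFs₀1 : Ff f s₀ < Ff f 1 := by
      have hint : Ff f s₀ + ∫ s in s₀..1, f s = Ff f 1 :=
        intervalIntegral.integral_add_adjacent_intervals
          (hf.intervalIntegrable 0 s₀) (hf.intervalIntegrable s₀ 1)
      have hppos : 0 < ∫ s in s₀..1, f s :=
        intervalIntegral.intervalIntegral_pos_of_pos_on (hf.intervalIntegrable s₀ 1)
          (fun x hx => hpos x (Or.inr hx)) hs₀1
      linarith
    linarith
  · have hfr : 0 < f (v a) := hpos _ (Or.inr ⟨hr, h1⟩)
    have hw'a : deriv (deriv v) a < 0 := by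
      have := hode a
      rw [hwa] at this
      linarith
    obtain ⟨y, -, hwy⟩ := right_of_neg2 hd2 hw' hwa hw'a one_pos
    exact absurd (hnn y) (not_le.mpr hwy)

end Main

lemma ereal_lt_of {z₀ z₁ : EReal} (h0 : z₀ ≠ ⊤) (h1 : z₁ ≠ ⊥)
    (h : ∀ r₀ r₁ : ℝ, z₀ = r₀ → z₁ = r₁ → r₀ < r₁) : z₀ < z₁ := by
  induction z₀ using EReal.rec with
  | bot => exact Ne.bot_lt h1
  | coe r₀ =>
    induction z₁ using EReal.rec with
    | bot => exact absurd rfl h1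
    | coe r₁ => exact_mod_cast h r₀ r₁ rfl rfl
    | top => exact EReal.coe_lt_top r₀
  | top => exact absurd rfl h0

theorem stmt_7 (f : ℝ → ℝ) (s₀ c : ℝ) (v : ℝ → ℝ)
    (hf : Continuous f) (hs₀ : 0 < s₀) (hs₀1 : s₀ < 1)
    (hf0 : f 0 = 0) (hfs₀ : f s₀ = 0) (hf1 : f 1 = 0)
    (hneg : ∀ s, (s ∈ Ioo 0 s₀ ∨ s ∈ Ioi 1) → f s < 0)
    (hpos : ∀ s, (s ∈ Iio 0 ∨ s ∈ Ioo s₀ 1) → 0 < f s)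
    (hF : ∀ r, 0 < r → r ≤ 1 → (∫ s in (0:ℝ)..r, f s) < 0)
    (hc : 0 < c)
    (hv : ContDiff ℝ 2 v)
    (hode : ∀ z, deriv (deriv v) z + c * deriv v z + f (v z) = 0)
    (hbot : Tendsto v atBot (nhds 0)) (htop : Tendsto v atTop (nhds 1)) :
    (∀ z, 0 ≤ deriv v z) ∧
    ∃ z₀ z₁ : EReal, z₀ < z₁ ∧
      (∀ z : ℝ, z₀ < (z : EReal) → (z : EReal) < z₁ → 0 < deriv v z) ∧
      (∀ z : ℝ, (z : EReal) ≤ z₀ → v z = 0) ∧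
      (∀ z : ℝ, z₁ ≤ (z : EReal) → v z = 1) := by
  obtain ⟨hd1, hd2, hw'⟩ := basics_aux hv
  have hnn : ∀ z, 0 ≤ deriv v z :=
    deriv_v_nonneg hf hs₀ hs₀1 hfs₀ hf1 hneg hpos hc hd1 hd2 hw' hode hbot htop
  have hv1 : ∀ z, v z ≤ 1 := v_le_one hd1 hd2 hw' hode hbot htop
    (fun s hs => hneg s (Or.inr hs))
  have hv0 : ∀ z, 0 ≤ v z := v_nonneg hd1 hd2 hw' hode hbot htop
    (fun s hs => hpos s (Or.inl hs))
  have hmono : Monotone v := monotone_of_deriv_nonneg hd1 hnn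
  obtain ⟨zp, hzp⟩ := (htop.eventually_const_lt (by norm_num : (1:ℝ)/2 < 1)).exists
  obtain ⟨zq, hzq⟩ := (hbot.eventually_lt_const (by norm_num : (0:ℝ) < 1/2)).exists
  have hzp' : 0 < v zp := by linarith
  have hzq' : v zq < 1 := by linarith
  have hleft : ∃ z₀ : EReal, z₀ ≠ ⊤ ∧ (∀ z : ℝ, (z:EReal) ≤ z₀ → v z = 0) ∧
      (∀ z : ℝ, v z = 0 → (z:EReal) ≤ z₀) := by
    by_cases hA : {z : ℝ | v z = 0}.Nonempty
    · have hbdd : BddAbove {z : ℝ | v z = 0} := by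
        refine ⟨zp, fun z hz => ?_⟩
        by_contra hzz
        push_neg at hzz
        have h2 := hmono hzz.le
        rw [hz] at h2
        linarith
      have hcl : IsClosed {z : ℝ | v z = 0} := isClosed_eq hd1.continuous continuous_const
      have hmem : v (sSup {z : ℝ | v z = 0}) = 0 := hcl.csSup_mem hA hbdd
      refine ⟨((sSup {z : ℝ | v z = 0} : ℝ) : EReal), EReal.coe_ne_top _, ?_, ?_⟩
      · intro z hz
        rw [EReal.coe_le_coe_iff] at hz
        have h2 := hmono hz
        rw [hmem] at h2
        exact le_antisymm h2 (hv0 z)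
      · intro z hz
        exact EReal.coe_le_coe_iff.mpr (le_csSup hbdd hz)
    · refine ⟨⊥, bot_ne_top, ?_, ?_⟩
      · intro z hz
        exact absurd (le_bot_iff.mp hz) (EReal.coe_ne_bot z)
      · intro z hz
        exact absurd ⟨z, hz⟩ hA
  have hright : ∃ z₁ : EReal, z₁ ≠ ⊥ ∧ (∀ z : ℝ, z₁ ≤ (z:EReal) → v z = 1) ∧
      (∀ z : ℝ, v z = 1 → z₁ ≤ (z:EReal)) := by
    by_cases hA : {z : ℝ | v z = 1}.Nonempty
    · have hbdd : BddBelow {z : ℝ | v z = 1} := by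
        refine ⟨zq, fun z hz => ?_⟩
        by_contra hzz
        push_neg at hzz
        have h2 := hmono hzz.le
        rw [hz] at h2
        linarith
      have hcl : IsClosed {z : ℝ | v z = 1} := isClosed_eq hd1.continuous continuous_const
      have hmem : v (sInf {z : ℝ | v z = 1}) = 1 := hcl.csInf_mem hA hbdd
      refine ⟨((sInf {z : ℝ | v z = 1} : ℝ) : EReal), EReal.coe_ne_bot _, ?_, ?_⟩
      · intro z hz
        rw [EReal.coe_le_coe_iff] at hz
        have h2 := hmono hz
        rw [hmem] at h2
        exact le_antisymm (hv1 z) h2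
      · intro z hz
        exact EReal.coe_le_coe_iff.mpr (csInf_le hbdd hz)
    · refine ⟨⊤, top_ne_bot, ?_, ?_⟩
      · intro z hz
        exact absurd (top_le_iff.mp hz) (EReal.coe_ne_top z)
      · intro z hz
        exact absurd ⟨z, hz⟩ hA
  obtain ⟨z₀, hz₀top, hz₀eq, hz₀mem⟩ := hleft
  obtain ⟨z₁, hz₁bot, hz₁eq, hz₁mem⟩ := hright
  refine ⟨hnn, z₀, z₁, ?_, ?_, hz₀eq, hz₁eq⟩
  · apply ereal_lt_of hz₀top hz₁bot
    intro r₀ r₁ h₀ h₁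
    have hv0r : v r₀ = 0 := hz₀eq r₀ (le_of_eq h₀.symm)
    have hv1r : v r₁ = 1 := hz₁eq r₁ (le_of_eq h₁)
    by_contra hcon
    push_neg at hcon
    have := hmono hcon
    rw [hv0r, hv1r] at this
    linarith
  · intro z hz0 hz1
    have h0 : 0 < v z := by
      rcases eq_or_lt_of_le (hv0 z) with h | h
      · exact absurd (hz₀mem z h.symm) (not_le.mpr hz0)
      · exact h
    have h1 : v z < 1 := by
      rcases eq_or_lt_of_le (hv1 z) with h | h
      · exact absurd (hz₁mem z h) (not_le.mpr hz1)
      · exact h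
    exact deriv_v_pos hf hs₀ hs₀1 hfs₀ hf1 hneg hpos hc hd1 hd2 hw' hode hbot htop hnn h0 h1
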